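/- For every integer t ≥ 1, the class number of the imaginary quadratic field ℚ(√(1 − 2916t³)) is divisible by 3. -/

import Mathlib

open Polynomial NumberField

private lemma cancel_ideal {R : Type*} [CommRing R] [IsDomain R] [IsDedekindDomain R]
    (A B C D : Ideal R) (hC : C ≠ 0) (hD : D ≠ 0) (h : A * B = C * D)
    (hAC : A ≤ C) (hBD : B ≤ D) : A = C := by
  obtain ⟨A', rfl⟩ := Ideal.dvd_iff_le.2 hAC
  obtain ⟨B', rfl⟩ := Ideal.dvd_iff_le.2 hBD
  have hCD : C * D ≠ 0 := mul_ne_zero hC hD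
  have h1 : (C * D) * (A' * B') = (C * D) * 1 := by
    rw [mul_one]
    calc (C * D) * (A' * B') = C * A' * (D * B') := by ring
      _ = C * D := h
  have h2 : A' * B' = 1 := mul_left_cancel₀ hCD h1
  have h3 : A' = ⊤ := by
    have : (1 : Ideal R) ≤ A' := h2 ▸ Ideal.mul_le_left
    simpa [Ideal.one_eq_top, top_le_iff] using this
  rw [h3, Ideal.mul_top]

private lemma int_cube_eq (s p : ℤ) (h : s ^ 3 - 3 * p * s = 1) : p = 0 ∧ s = 1 := by
  have hdvd : s ∣ 1 := ⟨s ^ 2 - 3 * p, by linarith [h]⟩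
  have := Int.isUnit_iff.1 (isUnit_of_dvd_one hdvd)
  rcases this with h1 | h1 <;> subst h1 <;> constructor <;> omega

private lemma descent (c D : ℤ) (hc : c = 1 ∨ c = 3) (q : ℚ)
    (h : q ^ 2 * (D : ℚ) = (c : ℚ)) : ∃ e : ℤ, D = c * e ^ 2 := by
  set n : ℤ := q.num with hn
  set e : ℤ := (q.den : ℤ) with he
  have hepos : 0 < e := by rw [he]; exact_mod_cast q.pos
  have he0 : (e : ℚ) ≠ 0 := by positivity
  have hq : (q : ℚ) = (n : ℚ) / (e : ℚ) := (Rat.num_div_den q).symm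
  have key : (n : ℚ) ^ 2 * (D : ℚ) = (c : ℚ) * (e : ℚ) ^ 2 := by
    rw [hq] at h; field_simp at h; linarith [h]
  have keyZ : n ^ 2 * D = c * e ^ 2 := by exact_mod_cast key
  have hcop : IsCoprime n e := by
    rw [Int.isCoprime_iff_gcd_eq_one]
    simpa [Int.gcd, hn, he] using q.reduced
  have hdvd : n ^ 2 ∣ c * e ^ 2 := ⟨D, keyZ.symm⟩
  have hn2c : n ^ 2 ∣ c := (hcop.pow).dvd_of_dvd_mul_right hdvd
  have hcpos : (0:ℤ) < c := by omega
  have hn0 : n ≠ 0 := by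
    intro h0
    rw [h0] at keyZ
    nlinarith [keyZ, hcpos, hepos]
  have hle : n ^ 2 ≤ 3 := by
    have := Int.le_of_dvd hcpos hn2c
    omega
  have hub : n ≤ 1 := by nlinarith
  have hlb : -1 ≤ n := by nlinarith
  have hcase : n = 1 ∨ n = -1 := by omega
  have hsq : n ^ 2 = 1 := by rcases hcase with h1 | h1 <;> rw [h1] <;> norm_num
  rw [hsq, one_mul] at keyZ
  exact ⟨e, keyZ⟩

private lemma no_sq_one (t : ℤ) (q : ℚ) :
    q ^ 2 * ((2916 * t ^ 3 - 1 : ℤ) : ℚ) ≠ 1 := by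
  intro h
  obtain ⟨e, hD⟩ := descent 1 (2916 * t ^ 3 - 1) (Or.inl rfl) q (by exact_mod_cast h)
  have h4 := congrArg (fun x : ℤ => (x : ZMod 4)) hD
  push_cast at h4
  generalize (t : ZMod 4) = a at h4
  generalize (e : ZMod 4) = b at h4
  revert h4; revert a b; decide

private lemma no_sq_three (t : ℤ) (q : ℚ) :
    q ^ 2 * ((2916 * t ^ 3 - 1 : ℤ) : ℚ) ≠ 3 := by
  intro h
  obtain ⟨e, hD⟩ := descent 3 (2916 * t ^ 3 - 1) (Or.inr rfl) q (by exact_mod_cast h)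
  have h3 := congrArg (fun x : ℤ => (x : ZMod 3)) hD
  push_cast at h3
  generalize (t : ZMod 3) = a at h3
  generalize (e : ZMod 3) = b at h3
  revert h3; revert a b; decide

section helpers

variable (t : ℤ) {K : Type} [Field K] [NumberField K] (z : K)

private lemma cube_ge (ht : 1 ≤ t) : (1 - 2916 * t ^ 3 : ℤ) ≤ -2915 := by
  have h1 : (1:ℤ) ^ 3 ≤ t ^ 3 := pow_le_pow_left₀ (by norm_num) ht 3
  nlinarith [h1]

-- linear independence of 1, z
private lemma indep_aux (ht : 1 ≤ t) (hz2 : z ^ 2 = ((1 - 2916 * t ^ 3 : ℤ) : K))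
    (x y : ℚ) (h : algebraMap ℚ K x + algebraMap ℚ K y * z = 0) : x = 0 ∧ y = 0 := by
  have hinj : Function.Injective (algebraMap ℚ K) := (algebraMap ℚ K).injective
  by_cases hy : y = 0
  · subst hy
    simp only [map_zero, zero_mul, add_zero] at h
    exact ⟨hinj (by simpa using h), rfl⟩
  · exfalso
    have hy' : algebraMap ℚ K y ≠ 0 := by
      simpa using fun hc => hy (hinj (by simpa using hc))
    have hzq : z = algebraMap ℚ K (-x) / algebraMap ℚ K y := by
      rw [eq_div_iff hy', map_neg]; linear_combination h
    rw [← map_div₀] at hzq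
    have : algebraMap ℚ K ((-x / y) ^ 2) = algebraMap ℚ K ((1 - 2916 * t ^ 3 : ℤ) : ℚ) := by
      rw [map_pow, ← hzq, hz2]
      simp [map_intCast]
    have h2 : ((-x / y) ^ 2 : ℚ) = ((1 - 2916 * t ^ 3 : ℤ) : ℚ) := hinj this
    have h3 : ((1 - 2916 * t ^ 3 : ℤ) : ℚ) ≤ -2915 := by exact_mod_cast cube_ge t ht
    nlinarith [sq_nonneg (-x / y), h2, h3]


-- every element of K is x + y z
private lemma rep_aux (hadj : IntermediateField.adjoin ℚ {z} = ⊤) (hz2 : z ^ 2 = ((1 - 2916 * t ^ 3 : ℤ) : K))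
    (w : K) : ∃ x y : ℚ, w = algebraMap ℚ K x + algebraMap ℚ K y * z := by
  have hzint : IsIntegral ℚ z := IsIntegral.of_finite ℚ z
  have htop : Algebra.adjoin ℚ {z} = ⊤ := by
    have h1 := IntermediateField.adjoin_simple_toSubalgebra_of_isAlgebraic hzint.isAlgebraic
    rw [show IntermediateField.adjoin ℚ {z} = ⊤ from hadj] at h1
    rw [← h1]
    rfl
  have hw : w ∈ (Polynomial.aeval z : ℚ[X] →ₐ[ℚ] K).range := by
    rw [← Algebra.adjoin_singleton_eq_range_aeval, htop]; trivial
  obtain ⟨P, hP⟩ := hw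
  set f : ℚ[X] := X ^ 2 - C ((1 - 2916 * t ^ 3 : ℤ) : ℚ) with hf
  have hfmonic : f.Monic := monic_X_pow_sub_C _ (by norm_num)
  have hfz : aeval z f = 0 := by
    rw [hf]
    simp only [map_sub, map_pow, aeval_X, aeval_C]
    rw [hz2]
    simp [map_intCast]
  have hmod : aeval z P = aeval z (P %ₘ f) := by
    conv_lhs => rw [← modByMonic_add_div P f]
    simp [hfz]
  have hdeg : (P %ₘ f).natDegree ≤ 1 := by
    have h1 : (P %ₘ f).degree < f.degree := degree_modByMonic_lt P hfmonic
    have h2 : f.degree = 2 := by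
      rw [hf]; compute_degree!
    rw [h2] at h1
    by_cases h0 : P %ₘ f = 0
    · simp [h0]
    · have := (natDegree_lt_iff_degree_lt (n := 2) h0).2 (by exact_mod_cast h1)
      omega
  have hP' : aeval z P = w := hP
  refine ⟨(P %ₘ f).coeff 0, (P %ₘ f).coeff 1, ?_⟩
  rw [← hP', hmod]
  conv_lhs => rw [eq_X_add_C_of_natDegree_le_one hdeg]
  simp only [map_add, map_mul, aeval_C, aeval_X]
  ring

-- integrality of quadratic coefficients
private lemma quad_aux (ht : 1 ≤ t) (hz2 : z ^ 2 = ((1 - 2916 * t ^ 3 : ℤ) : K))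
    (x y : ℚ) (hy : y ≠ 0)
    (hbint : IsIntegral ℤ (algebraMap ℚ K x + algebraMap ℚ K y * z)) :
    (∃ S : ℤ, (S : ℚ) = 2 * x) ∧
      (∃ P : ℤ, (P : ℚ) = x ^ 2 - ((1 - 2916 * t ^ 3 : ℤ) : ℚ) * y ^ 2) := by
  set d : ℚ := ((1 - 2916 * t ^ 3 : ℤ) : ℚ) with hd
  set b : K := algebraMap ℚ K x + algebraMap ℚ K y * z with hb
  set f : ℚ[X] := X ^ 2 - C (2 * x) * X + C (x ^ 2 - d * y ^ 2) with hf
  have hfmonic : f.Monic := by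
    have h1 : f = X ^ 2 - (C (2 * x) * X - C (x ^ 2 - d * y ^ 2)) := by rw [hf]; ring
    have h2 : (C (2 * x) * X - C (x ^ 2 - d * y ^ 2))
        = C (2 * x) * X + C (-(x ^ 2 - d * y ^ 2)) := by rw [map_neg]; ring
    rw [h1, h2]
    exact monic_X_pow_sub (lt_of_le_of_lt (degree_linear_le) (by decide))
  have hcast : algebraMap ℚ K d = ((1 - 2916 * t ^ 3 : ℤ) : K) := by
    rw [hd, map_intCast]
  have hfb : aeval b f = 0 := by
    rw [hf]
    simp only [map_add, map_sub, map_mul, map_pow, aeval_X, aeval_C]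
    simp only [map_mul, map_sub, map_pow, map_ofNat]
    rw [hb]
    linear_combination (algebraMap ℚ K y) ^ 2 * (hz2.trans hcast.symm)
  have hbQ : IsIntegral ℚ b := IsIntegral.of_finite ℚ b
  have hqdvd : minpoly ℚ b ∣ f := minpoly.dvd ℚ b hfb
  have hf0 : f ≠ 0 := hfmonic.ne_zero
  have hfdeg : f.natDegree = 2 := by rw [hf]; compute_degree!
  have hqle : (minpoly ℚ b).natDegree ≤ 2 := hfdeg ▸ natDegree_le_of_dvd hqdvd hf0
  have hqpos : 0 < (minpoly ℚ b).natDegree := minpoly.natDegree_pos hbQ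
  have hqne1 : (minpoly ℚ b).natDegree ≠ 1 := by
    intro h1
    have hqmon : (minpoly ℚ b).Monic := minpoly.monic hbQ
    have hc1 : (minpoly ℚ b).coeff 1 = 1 := by
      have := hqmon.coeff_natDegree
      rwa [h1] at this
    have hq := eq_X_add_C_of_natDegree_le_one (le_of_eq h1)
    rw [hc1, map_one, one_mul] at hq
    have haev := minpoly.aeval ℚ b
    rw [hq] at haev
    simp only [map_add, aeval_X, aeval_C] at haev
    have h0 : algebraMap ℚ K (x + (minpoly ℚ b).coeff 0) + algebraMap ℚ K y * z = 0 := by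
      rw [map_add]
      rw [hb] at haev
      linear_combination haev
    exact hy (indep_aux t z ht hz2 _ _ h0).2
  have hqdeg : (minpoly ℚ b).natDegree = 2 := by omega
  -- minpoly = f
  have hqf : minpoly ℚ b = f := by
    obtain ⟨r, hr⟩ := hqdvd
    have hr0 : r ≠ 0 := by
      intro h0; rw [h0, mul_zero] at hr; exact hf0 hr
    have hq0 : minpoly ℚ b ≠ 0 := minpoly.ne_zero (hbQ)
    have hdeg2 : r.natDegree = 0 := by
      have := natDegree_mul hq0 hr0
      rw [← hr, hfdeg, hqdeg] at this
      omega
    have hrC : r = C (r.coeff 0) := eq_C_of_natDegree_eq_zero hdeg2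
    have hlc : r.coeff 0 = 1 := by
      have h1 : f.leadingCoeff = (minpoly ℚ b).leadingCoeff * r.leadingCoeff := by
        rw [hr, leadingCoeff_mul]
      rw [hfmonic.leadingCoeff, (minpoly.monic hbQ).leadingCoeff, one_mul] at h1
      rw [leadingCoeff, hdeg2] at h1
      exact h1.symm
    rw [hr, hrC, hlc, map_one, mul_one]
  -- integer coefficients
  have heq : minpoly ℚ b = (minpoly ℤ b).map (algebraMap ℤ ℚ) := by
    have h1 := minpoly.isIntegrallyClosed_eq_field_fractions ℚ K (R := ℤ) (S := K) hbint
    simpa using h1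
  have hco : ∀ i, f.coeff i = ((minpoly ℤ b).coeff i : ℚ) := by
    intro i
    rw [← hqf, heq, coeff_map, eq_intCast]
  have hcoeff1 : f.coeff 1 = -(2 * x) := by
    rw [hf]
    simp only [coeff_add, coeff_sub, coeff_X_pow, coeff_C_mul, coeff_X_one, coeff_C]
    norm_num
  have hcoeff0 : f.coeff 0 = x ^ 2 - d * y ^ 2 := by
    rw [hf]
    simp only [coeff_add, coeff_sub, coeff_X_pow, coeff_C_mul, coeff_X_zero, coeff_C]
    norm_num
  constructor
  · exact ⟨-((minpoly ℤ b).coeff 1), by push_cast; rw [← hco 1, hcoeff1]; ring⟩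
  · exact ⟨(minpoly ℤ b).coeff 0, by rw [← hco 0, hcoeff0]⟩

private lemma unit_pm (ht : 1 ≤ t) (hz2 : z ^ 2 = ((1 - 2916 * t ^ 3 : ℤ) : K))
    (hadj : IntermediateField.adjoin ℚ {z} = ⊤) (u : (𝓞 K)ˣ) :
    algebraMap (𝓞 K) K (u : 𝓞 K) = 1 ∨ algebraMap (𝓞 K) K (u : 𝓞 K) = -1 := by
  set v : K := algebraMap (𝓞 K) K (u : 𝓞 K) with hv
  set w : K := algebraMap (𝓞 K) K ((u⁻¹ : (𝓞 K)ˣ) : 𝓞 K) with hw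
  have hvw : v * w = 1 := by
    rw [hv, hw, ← map_mul, u.mul_inv, map_one]
  have hinj : Function.Injective (algebraMap ℚ K) := (algebraMap ℚ K).injective
  have hvint : IsIntegral ℤ v := (u : 𝓞 K).isIntegral_coe
  have hwint : IsIntegral ℤ w := ((u⁻¹ : (𝓞 K)ˣ) : 𝓞 K).isIntegral_coe
  obtain ⟨x, y, hxy⟩ := rep_aux t z hadj hz2 v
  set d : ℚ := ((1 - 2916 * t ^ 3 : ℤ) : ℚ) with hd
  have hdneg : d ≤ -2915 := by rw [hd]; exact_mod_cast cube_ge t ht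
  have hz2' : z ^ 2 = algebraMap ℚ K d := by rw [hz2, hd, map_intCast]
  by_cases hy : y = 0
  · -- v rational
    rw [hy, map_zero, zero_mul, add_zero] at hxy
    have hxint : IsIntegral ℤ x := (isIntegral_algebraMap_iff hinj).1 (hxy ▸ hvint)
    obtain ⟨X, hX⟩ := IsIntegrallyClosed.isIntegral_iff.1 hxint
    have hx0 : x ≠ 0 := by
      intro h0
      rw [hxy, h0, map_zero, zero_mul] at hvw
      exact zero_ne_one hvw
    have hwx : w = algebraMap ℚ K x⁻¹ := by
      rw [map_inv₀, ← hxy]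
      have hvne : v ≠ 0 := by
        rw [hxy]
        simpa using fun hc => hx0 (hinj (by simpa using hc))
      field_simp
      linear_combination hvw
    have hxinvint : IsIntegral ℤ (x⁻¹ : ℚ) := (isIntegral_algebraMap_iff hinj).1 (hwx ▸ hwint)
    obtain ⟨X', hX'⟩ := IsIntegrallyClosed.isIntegral_iff.1 hxinvint
    have hXX' : X * X' = 1 := by
      have h1 : ((X * X' : ℤ) : ℚ) = 1 := by
        push_cast
        rw [show ((X:ℚ)) = x from hX, show ((X':ℚ)) = x⁻¹ from hX']
        field_simp
      exact_mod_cast h1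
    have hX1 : X = 1 ∨ X = -1 := Int.isUnit_iff.1 (IsUnit.of_mul_eq_one _ hXX')
    rcases hX1 with h1 | h1
    · left
      rw [hxy, ← hX, h1]
      simp
    · right
      rw [hxy, ← hX, h1]
      simp
  · -- y ≠ 0
    obtain ⟨⟨S, hS⟩, ⟨P, hP⟩⟩ := quad_aux t z ht hz2 x y hy (hxy ▸ hvint)
    rw [← hd] at hP
    set p : ℚ := x ^ 2 - d * y ^ 2 with hp
    have hy2 : 0 < y ^ 2 := lt_of_le_of_ne (sq_nonneg y) (fun h => hy (by nlinarith [sq_nonneg y]))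
    have hppos : 0 < p := by rw [hp]; nlinarith [sq_nonneg x, hy2, hdneg]
    have hp0 : p ≠ 0 := ne_of_gt hppos
    -- quadratic identity for v
    have hviden : v * (algebraMap ℚ K (2 * x) - v) = algebraMap ℚ K p := by
      rw [hxy, hp]
      simp only [map_sub, map_mul, map_pow, map_ofNat]
      linear_combination (-(algebraMap ℚ K y) ^ 2) * hz2'
    -- w coordinates
    have hwco : w = algebraMap ℚ K (x / p) + algebraMap ℚ K (-y / p) * z := by
      have h1 : w * algebraMap ℚ K p = algebraMap ℚ K (2 * x) - v := by
        have h2 : w * (v * (algebraMap ℚ K (2 * x) - v)) = algebraMap ℚ K (2 * x) - v := by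
          calc w * (v * (algebraMap ℚ K (2 * x) - v))
              = (v * w) * (algebraMap ℚ K (2 * x) - v) := by ring
            _ = algebraMap ℚ K (2 * x) - v := by rw [hvw, one_mul]
        rw [← h2, hviden]
      have hpne : algebraMap ℚ K p ≠ 0 := by
        simpa using fun hc => hp0 (hinj (by simpa using hc))
      have e1 : (x / p) * p = x := div_mul_cancel₀ x hp0
      have e2 : (-y / p) * p = -y := div_mul_cancel₀ (-y) hp0
      have h3 : (algebraMap ℚ K (x / p) + algebraMap ℚ K (-y / p) * z) * algebraMap ℚ K p
          = algebraMap ℚ K (2 * x) - v := by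
        rw [hxy]
        calc (algebraMap ℚ K (x / p) + algebraMap ℚ K (-y / p) * z) * algebraMap ℚ K p
            = algebraMap ℚ K ((x / p) * p) + algebraMap ℚ K ((-y / p) * p) * z := by
              rw [map_mul, map_mul]; ring
          _ = algebraMap ℚ K x + algebraMap ℚ K (-y) * z := by rw [e1, e2]
          _ = algebraMap ℚ K (2 * x) - (algebraMap ℚ K x + algebraMap ℚ K y * z) := by
              rw [two_mul, map_add, map_neg]; ring
      exact mul_right_cancel₀ hpne (h1.trans h3.symm)
    have hy' : (-y / p : ℚ) ≠ 0 := by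
      intro hc
      rw [_root_.div_eq_zero_iff] at hc
      rcases hc with hc | hc
      · exact hy (by linarith [neg_eq_zero.1 hc])
      · exact hp0 hc
    obtain ⟨⟨S', hS'⟩, ⟨P', hP'⟩⟩ := quad_aux t z ht hz2 (x / p) (-y / p) hy' (hwco ▸ hwint)
    rw [← hd] at hP'
    -- P' = 1 / p
    have hP'val : (P' : ℚ) = 1 / p := by
      rw [hP']
      rw [hp]
      field_simp
    have hPval : (P : ℚ) = p := hP
    have hPP' : P * P' = 1 := by
      have h1 : ((P * P' : ℤ) : ℚ) = 1 := by
        push_cast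
        rw [hPval, hP'val]
        field_simp
      exact_mod_cast h1
    have hP1 : P = 1 := by
      have h1 : P = 1 ∨ P = -1 := Int.isUnit_iff.1 (IsUnit.of_mul_eq_one _ hPP')
      rcases h1 with h1 | h1
      · exact h1
      · exfalso
        rw [h1] at hPval
        push_cast at hPval
        linarith [hppos]
    have hpeq : p = 1 := by
      rw [← hPval, hP1, Int.cast_one]
    -- bound S
    have hSsq : (S : ℚ) ^ 2 < 4 := by
      have h1 : (S : ℚ) ^ 2 = 4 * x ^ 2 := by rw [hS]; ring
      have h2 : x ^ 2 = p + d * y ^ 2 := by rw [hp]; ring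
      rw [h1, h2, hpeq]
      nlinarith [hy2, hdneg]
    have hSbound : S = 0 ∨ S = 1 ∨ S = -1 := by
      have h0 : S ^ 2 < 4 := by exact_mod_cast hSsq
      have h1' : S ≤ 1 := by nlinarith
      have h2' : -1 ≤ S := by nlinarith
      omega
    have hneg : ((2916 * t ^ 3 - 1 : ℤ) : ℚ) = -d := by rw [hd]; push_cast; ring
    have hthis : x ^ 2 - d * y ^ 2 = 1 := by rw [← hp, hpeq]
    exfalso
    rcases hSbound with h1 | h1 | h1
    · -- x = 0
      have hx0 : x = 0 := by
        rw [h1] at hS; push_cast at hS; linarith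
      apply no_sq_one t y
      rw [hneg]
      rw [hx0] at hthis
      linear_combination hthis
    · -- x = 1/2
      have hxh : x = 1/2 := by
        rw [h1] at hS; push_cast at hS; linarith
      apply no_sq_three t (2*y)
      rw [hneg]
      rw [hxh] at hthis
      linear_combination 4 * hthis
    · -- x = -1/2
      have hxh : x = -(1/2) := by
        rw [h1] at hS; push_cast at hS; linarith
      apply no_sq_three t (2*y)
      rw [hneg]
      rw [hxh] at hthis
      linear_combination 4 * hthis

end helpers

/-- For every integer `t ≥ 1`, the class number of the imaginary quadratic
field `ℚ(√(1 − 2916t³))` is divisible by `3`.  The quadratic field is encoded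
as any number field `K` generated over `ℚ` by a square root `z` of
`1 − 2916t³`. -/
theorem stmt_2 (t : ℤ) (ht : 1 ≤ t) :
    ∀ (K : Type) [Field K] [NumberField K] (z : K),
      z ^ 2 = ((1 - 2916 * t ^ 3 : ℤ) : K) →
      IntermediateField.adjoin ℚ {z} = ⊤ →
      3 ∣ NumberField.classNumber K := by
  intro K _ _ z hz2 hadj
  have hinj : Function.Injective (algebraMap ℚ K) := (algebraMap ℚ K).injective
  set d : ℚ := ((1 - 2916 * t ^ 3 : ℤ) : ℚ) with hd
  have hdneg : d ≤ -2915 := by rw [hd]; exact_mod_cast cube_ge t ht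
  have hz2' : z ^ 2 = algebraMap ℚ K d := by rw [hz2, hd, map_intCast]
  set θ : K := (1 + z) / 2 with hθ
  have hθco : θ = algebraMap ℚ K (1/2) + algebraMap ℚ K (1/2) * z := by
    rw [hθ]
    simp only [map_div₀, map_one, map_ofNat]
    ring
  have hθiden : θ ^ 2 - θ + ((729 * t ^ 3 : ℤ) : K) = 0 := by
    rw [hθ]
    have hcc : ((729 * t ^ 3 : ℤ) : K) = algebraMap ℚ K ((729 * t ^ 3 : ℤ) : ℚ) := by
      rw [map_intCast]
    rw [hcc]
    rw [show ((729 * t ^ 3 : ℤ) : ℚ) = (1 - d)/4 from by rw [hd]; push_cast; ring]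
    simp only [map_div₀, map_sub, map_one, map_ofNat]
    linear_combination (1/4 : K) * hz2'
  have hθint : IsIntegral ℤ θ := by
    refine ⟨X ^ 2 - X + C (729 * t ^ 3), ?_, ?_⟩
    · have h1 : (X ^ 2 - X + C (729 * t ^ 3) : ℤ[X]) = X ^ 2 - (X - C (729 * t ^ 3)) := by
        ring
      rw [h1]
      apply monic_X_pow_sub
      apply lt_of_le_of_lt (degree_sub_le _ _)
      simp only [max_lt_iff]
      exact ⟨by simpa using degree_X_le.trans_lt (by decide),
        lt_of_le_of_lt degree_C_le (by decide)⟩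
    · simp only [eval₂_add, eval₂_sub, eval₂_pow, eval₂_X, eval₂_C]
      have : algebraMap ℤ K (729 * t ^ 3) = ((729 * t ^ 3 : ℤ) : K) := by
        simp [eq_intCast]
      rw [this]
      exact hθiden
  set Θ : 𝓞 K := ⟨θ, hθint⟩ with hΘ
  set M : 𝓞 K := ((9 * t : ℤ) : 𝓞 K) with hM
  have hinjO : Function.Injective (algebraMap (𝓞 K) K) := NumberField.RingOfIntegers.coe_injective
  have hΘcoe : algebraMap (𝓞 K) K Θ = θ := rfl
  have hMcoe : algebraMap (𝓞 K) K M = ((9 * t : ℤ) : K) := by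
    rw [hM, map_intCast]
  have hkey : Θ * (1 - Θ) = M ^ 3 := by
    apply hinjO
    rw [map_mul, map_sub, map_one, map_pow, hΘcoe, hMcoe]
    have h9 : ((9 * t : ℤ) : K) ^ 3 = ((729 * t ^ 3 : ℤ) : K) := by
      push_cast
      ring
    rw [h9]
    linear_combination -hθiden
  set I : Ideal (𝓞 K) := Ideal.span {Θ, M} with hI
  set J : Ideal (𝓞 K) := Ideal.span {1 - Θ, M} with hJ
  -- I * J = (M)
  have hIJ : I * J = Ideal.span {M} := by
    rw [hI, hJ, Ideal.span_pair_mul_span_pair]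
    apply le_antisymm
    · rw [Ideal.span_le]
      rintro a ha
      simp only [Set.mem_insert_iff, Set.mem_singleton_iff] at ha
      rcases ha with rfl | rfl | rfl | rfl
      · exact Ideal.mem_span_singleton.2 ⟨M ^ 2, by linear_combination hkey⟩
      · exact Ideal.mem_span_singleton.2 ⟨Θ, by ring⟩
      · exact Ideal.mem_span_singleton.2 ⟨1 - Θ, by ring⟩
      · exact Ideal.mem_span_singleton.2 ⟨M, by ring⟩
    · rw [Ideal.span_le]
      rintro a ha
      simp only [Set.mem_singleton_iff] at ha
      subst ha
      have hsum : (M : 𝓞 K) = Θ * M + M * (1 - Θ) := by ring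
      have hmem : Θ * M + M * (1 - Θ) ∈
          Ideal.span ({Θ * (1 - Θ), Θ * M, M * (1 - Θ), M * M} : Set (𝓞 K)) :=
        add_mem (Ideal.subset_span (by simp)) (Ideal.subset_span (by simp))
      rwa [← hsum] at hmem
  -- I ^ 3 ≤ (Θ)
  have hI3le : I ^ 3 ≤ Ideal.span {Θ} := by
    rw [pow_three, hI, Ideal.span_pair_mul_span_pair, Ideal.span_mul_span, Ideal.span_le]
    rintro a ha
    simp only [Set.mem_mul, Set.mem_iUnion, Set.mem_insert_iff, Set.mem_singleton_iff, exists_prop] at ha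
    obtain ⟨s, hs, r, hr, rfl⟩ := ha
    apply Ideal.mem_span_singleton.2
    rcases hs with rfl | rfl
    · rcases hr with rfl | rfl | rfl | rfl
      · exact ⟨Θ * Θ, by ring⟩
      · exact ⟨Θ * M, by ring⟩
      · exact ⟨M * Θ, by ring⟩
      · exact ⟨M * M, by ring⟩
    · rcases hr with rfl | rfl | rfl | rfl
      · exact ⟨Θ * M, by ring⟩
      · exact ⟨M * M, by ring⟩
      · exact ⟨M * M, by ring⟩
      · exact ⟨(1 - Θ) * M ^ 0, by linear_combination -hkey⟩
  have hJ3le : J ^ 3 ≤ Ideal.span {1 - Θ} := by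
    rw [pow_three, hJ, Ideal.span_pair_mul_span_pair, Ideal.span_mul_span, Ideal.span_le]
    rintro a ha
    simp only [Set.mem_mul, Set.mem_iUnion, Set.mem_insert_iff, Set.mem_singleton_iff, exists_prop] at ha
    obtain ⟨s, hs, r, hr, rfl⟩ := ha
    apply Ideal.mem_span_singleton.2
    rcases hs with rfl | rfl
    · rcases hr with rfl | rfl | rfl | rfl
      · exact ⟨(1 - Θ) * (1 - Θ), by ring⟩
      · exact ⟨(1 - Θ) * M, by ring⟩
      · exact ⟨M * (1 - Θ), by ring⟩
      · exact ⟨M * M, by ring⟩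
    · rcases hr with rfl | rfl | rfl | rfl
      · exact ⟨(1 - Θ) * M, by ring⟩
      · exact ⟨M * M, by ring⟩
      · exact ⟨M * M, by ring⟩
      · exact ⟨Θ * M ^ 0, by linear_combination -hkey⟩
  -- nonvanishing
  have hθne : θ ≠ 0 := by
    intro h0
    rw [hθco] at h0
    exact absurd (indep_aux t z ht hz2 _ _ h0).1 (by norm_num)
  have hθne1 : (1 : K) - θ ≠ 0 := by
    intro h0
    have h1 : algebraMap ℚ K (-(1/2)) + algebraMap ℚ K (1/2) * z = 0 := by
      rw [show (-(1/2) : ℚ) = 1/2 - 1 from by norm_num, map_sub, map_one]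
      rw [hθco] at h0
      linear_combination -h0
    exact absurd (indep_aux t z ht hz2 _ _ h1).1 (by norm_num)
  have hΘne : Θ ≠ 0 := fun h0 => hθne (by rw [← hΘcoe, h0, map_zero])
  have hΘne1 : (1 : 𝓞 K) - Θ ≠ 0 := fun h0 => hθne1 (by
    have := congrArg (algebraMap (𝓞 K) K) h0
    rwa [map_sub, map_one, hΘcoe, map_zero] at this)
  have hspanΘ : Ideal.span {Θ} ≠ 0 := by
    simpa [Submodule.zero_eq_bot] using (fun h => hΘne (Ideal.span_singleton_eq_bot.1 h))
  have hspanΘ1 : Ideal.span {1 - Θ} ≠ 0 := by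
    simpa [Submodule.zero_eq_bot] using (fun h => hΘne1 (Ideal.span_singleton_eq_bot.1 h))
  -- cube identity for products
  have hprod : I ^ 3 * J ^ 3 = Ideal.span {Θ} * Ideal.span {1 - Θ} := by
    calc I ^ 3 * J ^ 3 = (I * J) ^ 3 := by ring
      _ = Ideal.span {M} ^ 3 := by rw [hIJ]
      _ = Ideal.span {M ^ 3} := Ideal.span_singleton_pow M 3
      _ = Ideal.span {Θ * (1 - Θ)} := by rw [hkey]
      _ = Ideal.span {Θ} * Ideal.span {1 - Θ} := (Ideal.span_singleton_mul_span_singleton _ _).symm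
  have hI3 : I ^ 3 = Ideal.span {Θ} :=
    cancel_ideal _ _ _ _ hspanΘ hspanΘ1 hprod hI3le hJ3le
  -- class group
  have hIne : I ≠ 0 := by
    intro h0
    have hmem : Θ ∈ I := Ideal.subset_span (by simp)
    rw [h0] at hmem
    exact hΘne (by simpa using hmem)
  have hInz : I ∈ nonZeroDivisors (Ideal (𝓞 K)) := mem_nonZeroDivisors_of_ne_zero hIne
  set cI : ClassGroup (𝓞 K) := ClassGroup.mk0 ⟨I, hInz⟩ with hcI
  have hc3 : cI ^ 3 = 1 := by
    rw [hcI, ← map_pow]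
    have hpoweq : (⟨I, hInz⟩ : (nonZeroDivisors (Ideal (𝓞 K)))) ^ 3 = ⟨I ^ 3, pow_mem hInz 3⟩ := rfl
    rw [hpoweq]
    rw [ClassGroup.mk0_eq_one_iff]
    exact ⟨Θ, hI3⟩
  have hcne : cI ≠ 1 := by
    intro h1
    rw [hcI, ClassGroup.mk0_eq_one_iff] at h1
    obtain ⟨α, hα⟩ := h1.principal
    have hα' : I = Ideal.span {α} := hα
    rw [hα', Ideal.span_singleton_pow, Ideal.span_singleton_eq_span_singleton] at hI3
    obtain ⟨u, hu⟩ := hI3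
    -- θ = (α u')^3 or θ = (-(α u'))^3 with u' = ±1
    have hαint : IsIntegral ℤ (algebraMap (𝓞 K) K α) := α.isIntegral_coe
    have hb : ∃ b : K, IsIntegral ℤ b ∧ b ^ 3 = θ := by
      rcases unit_pm t z ht hz2 hadj u with h | h
      · refine ⟨algebraMap (𝓞 K) K α, hαint, ?_⟩
        have := congrArg (algebraMap (𝓞 K) K) hu
        rw [map_mul, map_pow, hΘcoe, h, mul_one] at this
        exact this
      · refine ⟨-(algebraMap (𝓞 K) K α), hαint.neg, ?_⟩
        have := congrArg (algebraMap (𝓞 K) K) hu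
        rw [map_mul, map_pow, hΘcoe, h] at this
        rw [← this]
        ring
    obtain ⟨b, hbint, hb3⟩ := hb
    obtain ⟨x, y, hxyb⟩ := rep_aux t z hadj hz2 b
    have hyne : y ≠ 0 := by
      intro h0
      rw [h0, map_zero, zero_mul, add_zero] at hxyb
      have h2 : algebraMap ℚ K (x ^ 3 - 1/2) + algebraMap ℚ K (-(1/2)) * z = 0 := by
        rw [map_sub, map_neg]
        have h3 : algebraMap ℚ K (x ^ 3) = θ := by
          rw [map_pow, ← hxyb, hb3]
        rw [hθco] at h3
        linear_combination h3
      have := (indep_aux t z ht hz2 _ _ h2).2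
      norm_num at this
    obtain ⟨⟨S, hS⟩, ⟨P, hP⟩⟩ := quad_aux t z ht hz2 x y hyne (hxyb ▸ hbint)
    rw [← hd] at hP
    set p : ℚ := x ^ 2 - d * y ^ 2 with hp
    -- quadratic identity
    have hbiden : b ^ 2 = 2 * algebraMap ℚ K x * b - algebraMap ℚ K p := by
      rw [hxyb, hp]
      simp only [map_sub, map_mul, map_pow, map_ofNat]
      linear_combination (algebraMap ℚ K y) ^ 2 * hz2'
    -- coordinates of b ^ 3 agree with θ
    have hE5 : algebraMap ℚ K (((2*x)^2 - p) * x - (2*x) * p - 1/2)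
        + algebraMap ℚ K (((2*x)^2 - p) * y - 1/2) * z = 0 := by
      simp only [map_sub, map_mul, map_pow, map_add, map_div₀, map_one, map_ofNat]
      have hθz : θ = (1 + z) / 2 := hθ
      linear_combination hb3 - (b + 2 * algebraMap ℚ K x) * hbiden + hθz
        - ((2 * algebraMap ℚ K x)^2 - algebraMap ℚ K p) * hxyb
    obtain ⟨hA, hB⟩ := indep_aux t z ht hz2 _ _ hE5
    -- integer cubic equation
    have hSP : S ^ 3 - 3 * P * S = 1 := by
      have h1 : (S : ℚ) ^ 3 - 3 * (P : ℚ) * (S : ℚ) = 1 := by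
        rw [hS, hP]
        linear_combination 2 * hA
      exact_mod_cast h1
    obtain ⟨hP0, -⟩ := int_cube_eq S P hSP
    rw [hP0] at hP
    have hy2 : (0:ℚ) < y ^ 2 := lt_of_le_of_ne (sq_nonneg y) (Ne.symm (pow_ne_zero 2 hyne))
    have : (0 : ℚ) = x ^ 2 - d * y ^ 2 := by rw [← hp]; exact_mod_cast hP
    nlinarith [sq_nonneg x, hy2, hdneg, this]
  -- finish
  have horder : orderOf cI = 3 := by
    have hdvd := orderOf_dvd_of_pow_eq_one hc3
    rcases (Nat.prime_three).eq_one_or_self_of_dvd _ hdvd with h1 | h1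
    · exact absurd (orderOf_eq_one_iff.1 h1) hcne
    · exact h1
  have hcard : 3 ∣ Fintype.card (ClassGroup (𝓞 K)) := horder ▸ orderOf_dvd_card
  exact hcard
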